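/- arXiv:1808.01289 — 4 statements merged into one kernel-verified Lean document; each statement's English description precedes it below -/
import Mathlib

section
/- Let p be a prime and n ≥ 1. Let B := R₂[t₁,…,t_n] be a polynomial ring over R₂ and let h ∈ B be an element with h ∉ pB. Let A be the localization of B away from h, let τ₁,…,τ_n denote the images of t₁,…,t_n in A, and let d : A → Ω_{A/R₂} be the universal derivation. Then there exist NO ring endomorphism φ : A → A and matrix λ = (λ_{ij}) of size n×n with entries in R₂ such that simultaneously: (a) φ(r·1) = σ(r)·1 for every r ∈ R₂; (b) φ(a) − a^p ∈ pA for every a ∈ A; and (c) for every i, d(φ(τᵢ)) = Σⱼ (p·λ_{ij}) · d(τⱼ) in Ω_{A/R₂}. (This is the mod p² formulation of the statement that no nonempty open subset of a power of the additive group 𝔾_a over R admits a Frobenius lift on its p-adic completion that is Lie invariant mod p.) -/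
open MvPolynomial

set_option synthInstance.maxHeartbeats 2000000
set_option maxHeartbeats 2000000

/-- `R₂ = W(k)/p²W(k)`. -/
abbrev Rtwo (p : ℕ) [Fact p.Prime] (k : Type) [CommRing k] : Type :=
  WittVector p k ⧸ Ideal.span {((p : WittVector p k)) ^ 2}

/-- The endomorphism `σ` of `R₂` induced by the Witt vector Frobenius. -/
noncomputable def sigmaTwo (p : ℕ) [Fact p.Prime] (k : Type) [CommRing k] :
    Rtwo p k →+* Rtwo p k :=
  Ideal.quotientMap _ WittVector.frobenius (by
    rw [Ideal.span_singleton_le_iff_mem, Ideal.mem_comap, map_pow, map_natCast]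
    exact Ideal.subset_span rfl)

/-- The image `τᵢ` in `A` (the localization of `B = R₂[t₁,…,t_n]` away from `h`) of the
variable `tᵢ`. -/
noncomputable def tauCoord (p : ℕ) [Fact p.Prime] (k : Type) [CommRing k] (n : ℕ)
    (h : MvPolynomial (Fin n) (Rtwo p k)) (i : Fin n) : Localization.Away h :=
  algebraMap (MvPolynomial (Fin n) (Rtwo p k)) (Localization.Away h) (X i)

/-! ### Auxiliary lemmas on iterates of derivations -/

section DerivIter

open Finset

variable {R A : Type*} [CommRing R] [CommRing A] [Algebra R A]

lemma deriv_iter_add (D : Derivation R A A) (n : ℕ) (a b : A) :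
    (⇑D)^[n] (a + b) = (⇑D)^[n] a + (⇑D)^[n] b := by
  induction n generalizing a b with
  | zero => simp
  | succ n ih => simp [Function.iterate_succ_apply, map_add, ih]

lemma deriv_iter_zero (D : Derivation R A A) (n : ℕ) : (⇑D)^[n] (0 : A) = 0 :=
  Function.iterate_fixed (map_zero D) n

lemma deriv_iter_nsmul (D : Derivation R A A) (n m : ℕ) (a : A) :
    (⇑D)^[n] (m • a) = m • (⇑D)^[n] a := by
  induction n generalizing a with
  | zero => simp
  | succ n ih => rw [Function.iterate_succ_apply, map_nsmul, ih, ← Function.iterate_succ_apply]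

lemma deriv_iter_sub (D : Derivation R A A) (n : ℕ) (a b : A) :
    (⇑D)^[n] (a - b) = (⇑D)^[n] a - (⇑D)^[n] b := by
  induction n generalizing a b with
  | zero => simp
  | succ n ih => simp [Function.iterate_succ_apply, map_sub, ih]

lemma deriv_iter_one (D : Derivation R A A) (n : ℕ) (hn : 1 ≤ n) :
    (⇑D)^[n] (1 : A) = 0 := by
  obtain ⟨m, rfl⟩ := Nat.exists_eq_add_of_le hn
  rw [add_comm, Function.iterate_succ_apply]
  simp only [Derivation.map_one_eq_zero, deriv_iter_zero]

lemma deriv_iter_leibniz (D : Derivation R A A) (n : ℕ) (a b : A) :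
    (⇑D)^[n] (a * b) =
      ∑ k ∈ range (n + 1), n.choose k • ((⇑D)^[n - k] a * (⇑D)^[k] b) := by
  induction n with
  | zero => simp [Finset.range]
  | succ n IH =>
    calc
      (⇑D)^[n + 1] (a * b) =
          D (∑ k ∈ range n.succ, n.choose k • ((⇑D)^[n - k] a * (⇑D)^[k] b)) := by
        rw [Function.iterate_succ_apply', IH]
      _ = (∑ k ∈ range n.succ,
            n.choose k • ((⇑D)^[n - k + 1] a * (⇑D)^[k] b)) +
          ∑ k ∈ range n.succ,
            n.choose k • ((⇑D)^[n - k] a * (⇑D)^[k + 1] b) := by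
        simp_rw [map_sum, map_nsmul, D.leibniz, smul_eq_mul, Function.iterate_succ_apply',
          smul_add, sum_add_distrib]
        rw [add_comm]
        congr 1 <;>· exact Finset.sum_congr rfl fun k _ => by ring_nf
      _ = (∑ k ∈ range n.succ,
                n.choose k.succ • ((⇑D)^[n - k] a * (⇑D)^[k + 1] b)) +
              1 • ((⇑D)^[n + 1] a * (⇑D)^[0] b) +
            ∑ k ∈ range n.succ, n.choose k • ((⇑D)^[n - k] a * (⇑D)^[k + 1] b) := ?_
      _ = ((∑ k ∈ range n.succ, n.choose k • ((⇑D)^[n - k] a * (⇑D)^[k + 1] b)) +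
              ∑ k ∈ range n.succ,
                n.choose k.succ • ((⇑D)^[n - k] a * (⇑D)^[k + 1] b)) +
            1 • ((⇑D)^[n + 1] a * (⇑D)^[0] b) := by
        rw [add_comm, add_assoc]
      _ = (∑ i ∈ range n.succ,
              (n + 1).choose (i + 1) • ((⇑D)^[n + 1 - (i + 1)] a * (⇑D)^[i + 1] b)) +
            1 • ((⇑D)^[n + 1] a * (⇑D)^[0] b) := by
        simp_rw [Nat.choose_succ_succ, Nat.succ_sub_succ, add_smul, sum_add_distrib]
      _ = ∑ k ∈ range n.succ.succ,
            n.succ.choose k • ((⇑D)^[n.succ - k] a * (⇑D)^[k] b) := by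
        rw [sum_range_succ' _ n.succ, Nat.choose_zero_right, tsub_zero]
    congr
    refine (sum_range_succ' _ _).trans (congr_arg₂ (· + ·) ?_ ?_)
    · rw [sum_range_succ, Nat.choose_succ_self, zero_smul, add_zero]
      refine sum_congr rfl fun k hk => ?_
      rw [mem_range] at hk
      congr
      omega
    · rw [Nat.choose_zero_right, tsub_zero]

lemma deriv_iter_pow_self (D : Derivation R A A) {x : A} (hx : D x = 1) (m : ℕ) :
    (⇑D)^[m] (x ^ m) = (m.factorial : A) := by
  induction m with
  | zero => simp
  | succ m ih =>
      rw [Function.iterate_succ_apply, D.leibniz_pow, hx, Nat.add_sub_cancel, smul_eq_mul,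
        mul_one, deriv_iter_nsmul, ih, Nat.factorial_succ]
      push_cast
      rw [nsmul_eq_mul]
      push_cast
      ring

variable (p : ℕ) [Fact p.Prime]

lemma choose_smul_mem (k : ℕ) (hk0 : k ≠ 0) (hkp : k < p)
    (x : A) : p.choose k • x ∈ Ideal.span {(p : A)} := by
  obtain ⟨c, hc⟩ := (Fact.out (p := p.Prime)).dvd_choose_self hk0 hkp
  rw [hc, nsmul_eq_mul, Nat.cast_mul, mul_assoc]
  exact Ideal.mul_mem_right _ _ (Ideal.subset_span rfl)

lemma deriv_iter_p_mul (D : Derivation R A A) {a b : A}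
    (ha : (⇑D)^[p] a ∈ Ideal.span {(p : A)}) (hb : (⇑D)^[p] b ∈ Ideal.span {(p : A)}) :
    (⇑D)^[p] (a * b) ∈ Ideal.span {(p : A)} := by
  rw [deriv_iter_leibniz]
  refine Ideal.sum_mem _ fun k hk => ?_
  rw [Finset.mem_range] at hk
  rcases eq_or_ne k 0 with rfl | hk0
  · simpa using Ideal.mul_mem_right _ _ ha
  rcases eq_or_ne k p with rfl | hkp
  · simpa using Ideal.mul_mem_left _ _ hb
  exact choose_smul_mem p k hk0 (by omega) _

lemma deriv_iter_p_inv (D : Derivation R A A) {u v : A} (huv : u * v = 1)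
    (hu : (⇑D)^[p] u ∈ Ideal.span {(p : A)}) : (⇑D)^[p] v ∈ Ideal.span {(p : A)} := by
  have hp1 : 1 ≤ p := (Fact.out (p := p.Prime)).one_le
  have h0 : (0 : A) = ∑ k ∈ range (p + 1), p.choose k • ((⇑D)^[p - k] u * (⇑D)^[k] v) := by
    rw [← deriv_iter_leibniz, huv, deriv_iter_one _ _ hp1]
  rw [Finset.sum_range_succ, Nat.choose_self, Nat.sub_self] at h0
  have key : u * (⇑D)^[p] v ∈ Ideal.span {(p : A)} := by
    have heq : u * (⇑D)^[p] v =
        -∑ k ∈ range p, p.choose k • ((⇑D)^[p - k] u * (⇑D)^[k] v) := by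
      simp only [Function.iterate_zero, id_eq, one_smul] at h0
      linear_combination -h0
    rw [heq]
    refine neg_mem (Ideal.sum_mem _ fun k hk => ?_)
    rw [Finset.mem_range] at hk
    rcases eq_or_ne k 0 with rfl | hk0
    · simpa using Ideal.mul_mem_right _ _ hu
    · exact choose_smul_mem p k hk0 hk _
  have := Ideal.mul_mem_left _ v key
  rwa [← mul_assoc, mul_comm v u, huv, one_mul] at this

lemma pderiv_iter_p_mem {σ S : Type*} [CommRing S] (i : σ) (f : MvPolynomial σ S) :
    (⇑(MvPolynomial.pderiv i))^[p] f ∈ Ideal.span {(p : MvPolynomial σ S)} := by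
  classical
  have hp2 := (Fact.out (p := p.Prime)).two_le
  induction f using MvPolynomial.induction_on with
  | C a =>
      obtain ⟨m, hm⟩ : ∃ m, p = m + 1 := ⟨p - 1, by omega⟩
      rw [hm, Function.iterate_succ_apply, MvPolynomial.pderiv_C, deriv_iter_zero]
      exact zero_mem _
  | add f g hf hg => rw [deriv_iter_add]; exact add_mem hf hg
  | mul_X f j hf =>
      refine deriv_iter_p_mul p _ hf ?_
      obtain ⟨m, hm⟩ : ∃ m, p = m + 2 := ⟨p - 2, by omega⟩
      rw [hm, Function.iterate_succ_apply, MvPolynomial.pderiv_X]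
      rcases eq_or_ne i j with rfl | hij
      · rw [Pi.single_eq_same, deriv_iter_one _ _ (by omega)]; exact zero_mem _
      · rw [Pi.single_eq_of_ne (Ne.symm hij), deriv_iter_zero]; exact zero_mem _

lemma deriv_iter_map {B : Type*} [CommRing B] [Algebra R B] (D : Derivation R A A)
    (ι : B →+* A) (D' : Derivation R B B) (hcomm : ∀ b, D (ι b) = ι (D' b)) (m : ℕ) (b : B) :
    (⇑D)^[m] (ι b) = ι ((⇑D')^[m] b) := by
  induction m generalizing b with
  | zero => rfl
  | succ m ih =>
      rw [Function.iterate_succ_apply, hcomm, ih, ← Function.iterate_succ_apply]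

end DerivIter

/-! ### Extension of a derivation to a localization away from an element -/

section ExtDeriv
variable {R B A : Type*} [CommRing R] [CommRing B] [CommRing A]
  [Algebra R B] [Algebra B A] [Algebra R A] [IsScalarTower R B A]
  (h : B) [IsLocalization.Away h A]

/-- The ring hom `B → A[ε]`, `b ↦ (b, D' b)`. -/
noncomputable def derivHom (D' : Derivation R B B) : B →+* TrivSqZeroExt A A where
  toFun b := ⟨algebraMap B A b, algebraMap B A (D' b)⟩
  map_one' := by
    refine TrivSqZeroExt.ext ?_ ?_ <;> simp
  map_mul' b c := by
    refine TrivSqZeroExt.ext ?_ ?_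
    · simp [TrivSqZeroExt.fst_mul]
      rfl
    · simp only [TrivSqZeroExt.snd_mul, Derivation.leibniz, smul_eq_mul, map_add, map_mul,
        TrivSqZeroExt.fst_mk, TrivSqZeroExt.snd_mk, op_smul_eq_smul]
      try ring
      erw [TrivSqZeroExt.snd_mul]
      simp only [TrivSqZeroExt.fst_mk, TrivSqZeroExt.snd_mk, op_smul_eq_smul, smul_eq_mul]
  map_zero' := by refine TrivSqZeroExt.ext ?_ ?_ <;> simp
  map_add' b c := by refine TrivSqZeroExt.ext ?_ ?_ <;> simp <;> rfl

variable (D' : Derivation R B B)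

lemma derivHom_unit : IsUnit (derivHom (A := A) D' h) := by
  rw [TrivSqZeroExt.isUnit_iff_isUnit_fst]
  exact IsLocalization.Away.algebraMap_isUnit (S := A) h

/-- The lift `A → A[ε]`. -/
noncomputable def derivLift : A →+* TrivSqZeroExt A A :=
  IsLocalization.Away.lift (g := derivHom (A := A) D') h (derivHom_unit h D')

lemma derivLift_algebraMap (b : B) :
    derivLift (A := A) h D' (algebraMap B A b) = derivHom (A := A) D' b :=
  IsLocalization.Away.lift_eq _ _ _

lemma derivLift_fst (a : A) : (derivLift (A := A) h D' a).fst = a := by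
  have : (TrivSqZeroExt.fstHom A A A).toRingHom.comp (derivLift (A := A) h D') =
      RingHom.id A := by
    apply IsLocalization.ringHom_ext (Submonoid.powers h)
    ext b
    simp [derivLift_algebraMap, derivHom]
    rfl
  exact DFunLike.congr_fun this a

/-- The extension of a derivation to the localization. -/
noncomputable def extDerivLoc : Derivation R A A where
  toFun a := (derivLift (A := A) h D' a).snd
  map_add' a b := by simp
  map_smul' r a := by
    have key : r • a = algebraMap B A (algebraMap R B r) * a := by
      rw [← IsScalarTower.algebraMap_apply, Algebra.smul_def]
    show (derivLift (A := A) h D' (r • a)).snd = r • (derivLift (A := A) h D' a).snd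
    rw [key, map_mul, TrivSqZeroExt.snd_mul, derivLift_algebraMap]
    simp only [derivHom, RingHom.coe_mk, MonoidHom.coe_mk, OneHom.coe_mk,
      Derivation.map_algebraMap, map_zero, TrivSqZeroExt.snd_mk, TrivSqZeroExt.fst_mk,
      derivLift_fst, op_smul_eq_smul, smul_zero, add_zero, smul_eq_mul]
    change algebraMap B A (algebraMap R B r) * _ + a * algebraMap B A (D' (algebraMap R B r)) = _
    rw [Derivation.map_algebraMap, map_zero, mul_zero, add_zero]
    rw [← IsScalarTower.algebraMap_apply, ← Algebra.smul_def]
  map_one_eq_zero' := by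
    show (derivLift (A := A) h D' 1).snd = 0
    rw [map_one]
    rfl
  leibniz' a b := by
    show (derivLift (A := A) h D' (a * b)).snd =
      a • (derivLift (A := A) h D' b).snd + b • (derivLift (A := A) h D' a).snd
    rw [map_mul, TrivSqZeroExt.snd_mul, derivLift_fst, derivLift_fst, op_smul_eq_smul]

lemma extDeriv_algebraMap (b : B) :
    extDerivLoc (A := A) h D' (algebraMap B A b) = algebraMap B A (D' b) := by
  show (derivLift (A := A) h D' (algebraMap B A b)).snd = _
  rw [derivLift_algebraMap]
  rfl

end ExtDeriv

/-! ### Ring-theoretic facts about `R₂` and `B` -/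

section RtwoFacts

variable (p : ℕ) [Fact p.Prime] (k : Type) [Field k] [IsAlgClosed k] [CharP k p]

lemma natCast_rtwo : (p : Rtwo p k) = Ideal.Quotient.mk _ (p : WittVector p k) := by
  simp

lemma rtwo_ptorsion {r : Rtwo p k} (hr : (p : Rtwo p k) * r = 0) :
    r ∈ Ideal.span {(p : Rtwo p k)} := by
  obtain ⟨x, rfl⟩ := Ideal.Quotient.mk_surjective r
  rw [natCast_rtwo, ← map_mul, Ideal.Quotient.eq_zero_iff_mem, Ideal.mem_span_singleton] at hr
  obtain ⟨y, hy⟩ := hr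
  have hpn : (p : WittVector p k) ≠ 0 := WittVector.p_nonzero p k
  have hx : x = (p : WittVector p k) * y := mul_left_cancel₀ hpn (by rw [hy]; ring)
  rw [natCast_rtwo, hx, map_mul, Ideal.mem_span_singleton]
  exact Dvd.intro _ rfl

lemma span_p_rtwo_eq : (Ideal.span {(p : Rtwo p k)} : Ideal (Rtwo p k)) =
    Ideal.map (Ideal.Quotient.mk (Ideal.span {((p : WittVector p k)) ^ 2}))
      (Ideal.span {(p : WittVector p k)}) := by
  rw [Ideal.map_span, Set.image_singleton, natCast_rtwo]

lemma rtwo_quot_domain : IsDomain (Rtwo p k ⧸ Ideal.span {(p : Rtwo p k)}) := by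
  haveI := WittVector.isDiscreteValuationRing (p := p) (k := k)
  have hprime : Prime (p : WittVector p k) :=
    irreducible_iff_prime.mp (WittVector.irreducible p)
  haveI hWprime : (Ideal.span {(p : WittVector p k)}).IsPrime :=
    (Ideal.span_singleton_prime (WittVector.p_nonzero p k)).mpr hprime
  have hsup : Ideal.span {((p : WittVector p k)) ^ 2} ⊔ Ideal.span {(p : WittVector p k)} =
      Ideal.span {(p : WittVector p k)} := by
    rw [sup_eq_right, Ideal.span_le, Set.singleton_subset_iff]
    rw [SetLike.mem_coe, Ideal.mem_span_singleton]
    exact dvd_pow_self _ two_ne_zero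
  have e : (Rtwo p k ⧸ Ideal.span {(p : Rtwo p k)}) ≃+*
      WittVector p k ⧸ Ideal.span {(p : WittVector p k)} := by
    rw [span_p_rtwo_eq]
    exact (DoubleQuot.quotQuotEquivQuotSup _ _).trans (Ideal.quotEquivOfEq hsup)
  exact MulEquiv.isDomain _ e.toMulEquiv

end RtwoFacts

section PolyFacts

variable (p : ℕ) [Fact p.Prime]

variable {S : Type*} [CommRing S]

lemma map_C_span_p (σ : Type*) :
    (Ideal.map (C : S →+* MvPolynomial σ S) (Ideal.span {(p : S)}) :
      Ideal (MvPolynomial σ S)) = Ideal.span {(p : MvPolynomial σ S)} := by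
  rw [Ideal.map_span, Set.image_singleton, map_natCast]

lemma pmul_eq_zero_mem_span {σ : Type*} {g : MvPolynomial σ S}
    (htors : ∀ r : S, (p : S) * r = 0 → r ∈ Ideal.span {(p : S)})
    (hg : (p : MvPolynomial σ S) * g = 0) :
    g ∈ Ideal.span {(p : MvPolynomial σ S)} := by
  rw [← map_C_span_p p σ]
  rw [MvPolynomial.mem_map_C_iff]
  intro m
  apply htors
  have hC : (p : MvPolynomial σ S) = C (p : S) := by simp
  rw [hC] at hg
  have := congrArg (MvPolynomial.coeff m) hg
  rwa [coeff_C_mul, coeff_zero] at this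

lemma span_pB_prime {S₀ : Type*} [CommRing S₀]
    (hdom : IsDomain (S₀ ⧸ Ideal.span {(p : S₀)})) (σ : Type*) :
    (Ideal.span {(p : MvPolynomial σ S₀)}).IsPrime := by
  rw [← map_C_span_p p σ, ← Ideal.Quotient.isDomain_iff_prime]
  exact MulEquiv.isDomain (MvPolynomial σ (S₀ ⧸ Ideal.span {(p : S₀)}))
    (MvPolynomial.quotientEquivQuotientMvPolynomial _).symm.toMulEquiv

end PolyFacts

/-- There is no Frobenius lift on any basic open of a power `𝔾_a^n` of the additive group
over `R₂` that is Lie invariant mod `p` (mod-`p²` formulation). -/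
theorem no_lie_invariant_frobenius_lift_Ga_pow (p : ℕ) [Fact p.Prime]
    (k : Type) [Field k] [IsAlgClosed k] [CharP k p]
    (n : ℕ) (hn : 1 ≤ n)
    (h : MvPolynomial (Fin n) (Rtwo p k))
    (hh : h ∉ Ideal.span {(p : MvPolynomial (Fin n) (Rtwo p k))}) :
    ¬ ∃ (φ : Localization.Away h →+* Localization.Away h)
        (lam : Fin n → Fin n → Rtwo p k),
      -- (a) `φ` lifts `σ` on `R₂`
      (∀ r : Rtwo p k,
        φ (algebraMap (Rtwo p k) (Localization.Away h) r) =
          algebraMap (Rtwo p k) (Localization.Away h) (sigmaTwo p k r)) ∧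
      -- (b) `φ` is a Frobenius lift
      (∀ a : Localization.Away h, φ a - a ^ p ∈ Ideal.span {(p : Localization.Away h)}) ∧
      -- (c) Lie invariance mod `p` (formulated mod `p²`)
      (∀ i : Fin n,
        KaehlerDifferential.D (Rtwo p k) (Localization.Away h) (φ (tauCoord p k n h i)) =
          ∑ j : Fin n,
            algebraMap (Rtwo p k) (Localization.Away h) ((p : Rtwo p k) * lam i j) •
              KaehlerDifferential.D (Rtwo p k) (Localization.Away h) (tauCoord p k n h j)) := by
  classical
  rintro ⟨φ, lam, -, hfrob, hlie⟩
  have hp : p.Prime := Fact.out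
  have hp2le : 2 ≤ p := hp.two_le
  let B : Type := MvPolynomial (Fin n) (Rtwo p k)
  let A : Type := Localization.Away h
  let ι : B →+* A := algebraMap B A
  let i₀ : Fin n := ⟨0, hn⟩
  let D' : Derivation (Rtwo p k) B B := MvPolynomial.pderiv i₀
  let D : Derivation (Rtwo p k) A A := extDerivLoc h D'
  have hD : ∀ b : B, D (ι b) = ι (D' b) := fun b => extDeriv_algebraMap h D' b
  -- torsion in A
  have hAtors : ∀ x : A, (p : A) * x = 0 → x ∈ Ideal.span {(p : A)} := by
    intro x hx
    obtain ⟨⟨b, s⟩, rfl⟩ := IsLocalization.mk'_surjective (Submonoid.powers h) x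
    have key : ι ((p : B) * b) = 0 := by
      rw [map_mul, map_natCast]
      calc (p : A) * ι b = (p : A) * (IsLocalization.mk' A b s * ι (s : B)) := by
            rw [IsLocalization.mk'_spec]
        _ = ((p : A) * IsLocalization.mk' A b s) * ι (s : B) := by ring
        _ = 0 := by rw [hx, zero_mul]
    rw [IsLocalization.map_eq_zero_iff (Submonoid.powers h)] at key
    obtain ⟨⟨c, hc⟩, hce⟩ := key
    obtain ⟨e, rfl⟩ := hc
    have hz : (p : B) * (h ^ e * b) = 0 := by
      have := hce
      simp only at this
      linear_combination this
    have hmem := pmul_eq_zero_mem_span p (fun r hr => rtwo_ptorsion p k hr) hz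
    rw [Ideal.mem_span_singleton] at hmem
    obtain ⟨b', hb'⟩ := hmem
    rw [Ideal.mem_span_singleton]
    have h2 : IsLocalization.mk' A b s * ι ((s : B) * h ^ e) = (p : A) * ι b' := by
      rw [map_mul, ← mul_assoc, IsLocalization.mk'_spec, ← map_mul, ← map_natCast ι p, ← map_mul]
      congr 1
      rw [← hb']
      ring
    have hu : IsUnit (ι ((s : B) * h ^ e)) :=
      IsLocalization.map_units A ⟨(s : B) * h ^ e, Submonoid.mul_mem _ s.2 ⟨e, rfl⟩⟩
    obtain ⟨w, hw⟩ := hu.exists_right_inv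
    refine ⟨ι b' * w, ?_⟩
    calc IsLocalization.mk' A b s
        = IsLocalization.mk' A b s * (ι ((s : B) * h ^ e) * w) := by rw [hw, mul_one]
      _ = (IsLocalization.mk' A b s * ι ((s : B) * h ^ e)) * w := by ring
      _ = (p : A) * ι b' * w := by rw [h2]
      _ = (p : A) * (ι b' * w) := by ring
  -- D^[p] lands in pA
  have himg : ∀ c : B, (⇑D)^[p] (ι c) ∈ Ideal.span {(p : A)} := by
    intro c
    rw [deriv_iter_map D ι D' hD p c]
    have hmem := pderiv_iter_p_mem p i₀ c
    rw [Ideal.mem_span_singleton] at hmem ⊢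
    obtain ⟨c', hc'⟩ := hmem
    exact ⟨ι c', by rw [hc', map_mul, map_natCast]⟩
  have hDiv : ∀ a : A, (⇑D)^[p] a ∈ Ideal.span {(p : A)} := by
    intro a
    obtain ⟨⟨b, s⟩, rfl⟩ := IsLocalization.mk'_surjective (Submonoid.powers h) a
    dsimp only
    rw [IsLocalization.mk'_eq_mul_mk'_one]
    refine deriv_iter_p_mul p D (himg b) ?_
    refine deriv_iter_p_inv p D (u := ι (s : B)) ?_ (himg (s : B))
    exact (IsLocalization.mk'_spec' A 1 s).trans (map_one _)
  -- basic computations with τ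
  have hτ : ∀ j : Fin n, tauCoord p k n h j = ι (X j) := fun j => rfl
  have hDτ₀ : D (tauCoord p k n h i₀) = 1 := by
    rw [hτ, hD]
    show ι (MvPolynomial.pderiv i₀ (X i₀)) = 1
    rw [MvPolynomial.pderiv_X, Pi.single_eq_same, map_one]
  have hDτ : ∀ j : Fin n, j ≠ i₀ → D (tauCoord p k n h j) = 0 := by
    intro j hj
    rw [hτ, hD]
    show ι (MvPolynomial.pderiv i₀ (X j)) = 0
    rw [MvPolynomial.pderiv_X, Pi.single_eq_of_ne hj, map_zero]
  -- apply the functional induced by D to the Lie-invariance equation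
  set f := D.liftKaehlerDifferential with hfdef
  have hstep : D (φ (tauCoord p k n h i₀)) =
      algebraMap (Rtwo p k) A ((p : Rtwo p k) * lam i₀ i₀) := by
    have h0 := congrArg f (hlie i₀)
    rw [Derivation.liftKaehlerDifferential_comp_D] at h0
    rw [map_sum] at h0
    rw [Finset.sum_eq_single i₀] at h0
    · rw [map_smul, Derivation.liftKaehlerDifferential_comp_D, hDτ₀, smul_eq_mul, mul_one] at h0
      exact h0
    · intro j _ hj
      rw [map_smul, Derivation.liftKaehlerDifferential_comp_D, hDτ j hj]
      simp
    · intro hni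
      exact absurd (Finset.mem_univ i₀) hni
  -- Frobenius lift property
  obtain ⟨u, hu⟩ : ∃ u, φ (tauCoord p k n h i₀) - tauCoord p k n h i₀ ^ p = (p : A) * u := by
    have := hfrob (tauCoord p k n h i₀)
    rwa [Ideal.mem_span_singleton] at this
  have hφτ : φ (tauCoord p k n h i₀) = tauCoord p k n h i₀ ^ p + (p : A) * u := by
    linear_combination hu
  rw [hφτ, map_add] at hstep
  have hpow : D (tauCoord p k n h i₀ ^ p) = (p : A) * tauCoord p k n h i₀ ^ (p - 1) := by
    rw [D.leibniz_pow, hDτ₀, smul_eq_mul, mul_one, nsmul_eq_mul]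
  have hpu : D ((p : A) * u) = (p : A) * D u := by
    rw [show ((p : A) * u) = (p : ℕ) • u by rw [nsmul_eq_mul], map_nsmul, nsmul_eq_mul]
  have hrhs : algebraMap (Rtwo p k) A ((p : Rtwo p k) * lam i₀ i₀) =
      (p : A) * algebraMap (Rtwo p k) A (lam i₀ i₀) := by
    rw [map_mul, map_natCast]
  set l := algebraMap (Rtwo p k) A (lam i₀ i₀) with hldef
  have hmain : (p : A) * (tauCoord p k n h i₀ ^ (p - 1) + D u - l) = 0 := by
    rw [hpow, hpu, hrhs] at hstep
    linear_combination hstep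
  obtain ⟨v, hv⟩ : ∃ v, tauCoord p k n h i₀ ^ (p - 1) + D u - l = (p : A) * v := by
    have := hAtors _ hmain
    rwa [Ideal.mem_span_singleton] at this
  -- iterate D (p-1) times
  have happ := congrArg ((⇑D)^[p - 1]) hv
  rw [deriv_iter_sub, deriv_iter_add] at happ
  have h1 : (⇑D)^[p - 1] (tauCoord p k n h i₀ ^ (p - 1)) = ((p - 1).factorial : A) :=
    deriv_iter_pow_self D hDτ₀ (p - 1)
  have h2 : (⇑D)^[p - 1] (D u) = (⇑D)^[p] u := by
    have hps : p - 1 + 1 = p := by omega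
    have hit : (⇑D)^[p - 1] (D u) = (⇑D)^[p - 1 + 1] u :=
      (Function.iterate_succ_apply (⇑D) (p - 1) u).symm
    rw [hit, hps]
  have h3 : (⇑D)^[p - 1] l = 0 := by
    obtain ⟨m, hm⟩ : ∃ m, p - 1 = m + 1 := ⟨p - 2, by omega⟩
    rw [hm, Function.iterate_succ_apply, hldef, Derivation.map_algebraMap, deriv_iter_zero]
  have h4 : (⇑D)^[p - 1] ((p : A) * v) = (p : A) * (⇑D)^[p - 1] v := by
    rw [show ((p : A) * v) = (p : ℕ) • v by rw [nsmul_eq_mul], deriv_iter_nsmul, nsmul_eq_mul]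
  rw [h1, h2, h3, h4, sub_zero] at happ
  -- (p-1)! ∈ pA
  have hfacmem : (((p - 1).factorial : ℕ) : A) ∈ Ideal.span {(p : A)} := by
    have heq : (((p - 1).factorial : ℕ) : A) = (p : A) * (⇑D)^[p - 1] v - (⇑D)^[p] u := by
      linear_combination happ
    rw [heq]
    exact sub_mem (Ideal.mul_mem_right _ _ (Ideal.subset_span rfl)) (hDiv u)
  -- hence 1 ∈ pA
  have hone : (1 : A) ∈ Ideal.span {(p : A)} := by
    have hcop : Nat.gcd p ((p - 1).factorial) = 1 := by
      have hnd : ¬ (p ∣ (p - 1).factorial) := by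
        rw [hp.dvd_factorial]
        omega
      exact (Nat.Prime.coprime_iff_not_dvd hp).mpr hnd
    have hbez := Nat.gcd_eq_gcd_ab p ((p - 1).factorial)
    rw [hcop, Nat.cast_one] at hbez
    have hcast := congrArg (fun z : ℤ => (z : A)) hbez
    simp only [Int.cast_one, Int.cast_add, Int.cast_mul, Int.cast_natCast] at hcast
    rw [hcast]
    refine add_mem ?_ ?_
    · rw [Int.cast_mul, Int.cast_natCast]
      exact Ideal.mul_mem_right _ _ (Ideal.subset_span rfl)
    · rw [Int.cast_mul, Int.cast_natCast]
      exact Ideal.mul_mem_right _ _ hfacmem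
  rw [Ideal.mem_span_singleton] at hone
  obtain ⟨w, hw⟩ := hone
  obtain ⟨⟨b, s⟩, hbs⟩ := IsLocalization.mk'_surjective (Submonoid.powers h) w
  have h5 : ι (s : B) = (p : A) * ι b := by
    calc ι (s : B) = 1 * ι (s : B) := (one_mul _).symm
      _ = ((p : A) * w) * ι (s : B) := by rw [← hw]
      _ = (p : A) * (w * ι (s : B)) := by ring
      _ = (p : A) * ι b := by rw [← hbs, IsLocalization.mk'_spec]
  have h6 : ι ((s : B) - (p : B) * b) = 0 := by
    rw [map_sub, map_mul, map_natCast, h5]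
    ring
  rw [IsLocalization.map_eq_zero_iff (Submonoid.powers h)] at h6
  obtain ⟨⟨c, hc⟩, hce⟩ := h6
  obtain ⟨e, rfl⟩ := hc
  obtain ⟨m, hm⟩ := s.2
  have hm' : h ^ m = (s : MvPolynomial (Fin n) (Rtwo p k)) := hm
  have h7 : h ^ (e + m) = (p : B) * (h ^ e * b) := by
    have hlin : h ^ e * (s : B) = (p : B) * (h ^ e * b) := by
      simp only at hce
      linear_combination hce
    rw [pow_add, hm', hlin]
  have hprime := span_pB_prime p (rtwo_quot_domain p k) (Fin n)
  have hmemh : h ∈ Ideal.span {(p : B)} := by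
    refine hprime.mem_of_pow_mem (e + m) ?_
    rw [h7]
    exact Ideal.mul_mem_right _ _ (Ideal.subset_span rfl)
  exact hh hmemh
end

section
/- Let p be a prime, N ≥ 1, and let u be an N×N matrix over ℤ_p with (u−1)^p = 0. Then E_p(L_p(u)) = u. -/
open Polynomial Finset

namespace TruncAux
set_option linter.unusedVariables false
variable (p : ℕ) [hp : Fact p.Prime]

noncomputable def Lp : Polynomial ℚ_[p] :=
  ∑ j ∈ Finset.Icc 1 (p-1), C ((-1:ℚ_[p])^(j+1) * (j:ℚ_[p])⁻¹) * X^j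

noncomputable def Ep : Polynomial ℚ_[p] :=
  ∑ k ∈ Finset.range p, C ((k.factorial : ℚ_[p])⁻¹) * (Lp p)^k

lemma X_dvd_Lp : X ∣ Lp p := by
  refine dvd_sum fun j hj => ?_
  have hj1 : 1 ≤ j := (Finset.mem_Icc.mp hj).1
  exact Dvd.dvd.mul_left (dvd_pow_self X (by omega)) _

lemma Icc_eq : Finset.Icc 1 (p-1) = Finset.Ico 1 p := by
  rw [← Finset.Ico_add_one_right_eq_Icc]
  congr 1
  have := hp.out.pos
  omega

lemma deriv_Lp : derivative (Lp p) = ∑ i ∈ Finset.range (p-1), (-X)^i := by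
  rw [Lp, derivative_sum]
  rw [Icc_eq, Finset.sum_Ico_eq_sum_range]
  refine Finset.sum_congr rfl fun i hi => ?_
  rw [derivative_C_mul_X_pow]
  have hne : ((1:ℚ_[p]) + (i:ℚ_[p])) ≠ 0 := by
    have := Nat.cast_add_one_ne_zero (R := ℚ_[p]) i
    intro h; apply this; rw [add_comm] at h; exact h
  have : (-1:ℚ_[p])^(1+i+1) * ((1+i:ℕ):ℚ_[p])⁻¹ * ((1+i:ℕ):ℚ_[p]) = (-1:ℚ_[p])^i := by
    push_cast
    rw [pow_add, pow_add]
    field_simp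
  rw [this, show 1+i-1 = i from by omega, neg_pow (X : Polynomial ℚ_[p]) i]
  have hC : C ((-1:ℚ_[p])^i) = (-1 : Polynomial ℚ_[p])^i := by
    rw [← C_1 (R := ℚ_[p]), ← C_neg, ← C_pow]
  rw [hC]

lemma one_add_X_mul_deriv_Lp :
    (1 + X) * derivative (Lp p) = 1 - (-X)^(p-1) := by
  rw [deriv_Lp]
  have h := mul_geom_sum (-X : Polynomial ℚ_[p]) (p-1)
  linear_combination -h

lemma deriv_Ep : derivative (Ep p) =
    derivative (Lp p) * ∑ k ∈ Finset.range (p-1), C ((k.factorial : ℚ_[p])⁻¹) * (Lp p)^k := by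
  have hp1 : p = (p - 1) + 1 := by have := hp.out.pos; omega
  have hr : Finset.range p = Finset.range ((p-1)+1) := by rw [← hp1]
  rw [Ep, derivative_sum]
  conv_lhs => rw [hr, Finset.sum_range_succ']
  simp only [pow_zero, derivative_one, mul_zero, derivative_mul, derivative_C, zero_mul, zero_add, add_zero]
  rw [Finset.mul_sum]
  refine Finset.sum_congr rfl fun k hk => ?_
  rw [derivative_pow]
  have hfac : ((k+1).factorial : ℚ_[p])⁻¹ * ((k+1:ℕ) : ℚ_[p]) = ((k.factorial : ℚ_[p]))⁻¹ := by
    have h1 : ((k:ℚ_[p]) + 1) ≠ 0 := Nat.cast_add_one_ne_zero k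
    have h2 : ((k.factorial : ℕ) : ℚ_[p]) ≠ 0 := by exact_mod_cast Nat.factorial_ne_zero k
    rw [Nat.factorial_succ]
    push_cast
    rw [mul_inv]
    field_simp
  calc C (((k+1).factorial : ℚ_[p])⁻¹) * (C ((k+1:ℕ):ℚ_[p]) * (Lp p)^(k+1-1) * derivative (Lp p))
      = (C (((k+1).factorial : ℚ_[p])⁻¹) * C ((k+1:ℕ):ℚ_[p])) * ((Lp p)^k * derivative (Lp p)) := by
        rw [Nat.add_sub_cancel]; ring
    _ = derivative (Lp p) * (C ((k.factorial : ℚ_[p])⁻¹) * (Lp p)^k) := by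
        rw [← C_mul, hfac]; ring

lemma key_dvd : X^(p-1) ∣ ((1 + X) * derivative (Ep p) - Ep p) := by
  obtain ⟨g, hg⟩ := pow_dvd_pow_of_dvd (X_dvd_Lp p) (p-1)
  set S : Polynomial ℚ_[p] := ∑ k ∈ Finset.range (p-1), C ((k.factorial : ℚ_[p])⁻¹) * (Lp p)^k with hS
  have hE : Ep p = S + C ((((p-1).factorial : ℕ) : ℚ_[p])⁻¹) * (Lp p)^(p-1) := by
    have hp1 : p = (p - 1) + 1 := by have := hp.out.pos; omega
    have hr : Finset.range p = Finset.range ((p-1)+1) := by rw [← hp1]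
    rw [Ep]
    conv_lhs => rw [hr, Finset.sum_range_succ]
  have hmul : (1 + X) * derivative (Ep p)
      = S - (-X)^(p-1) * S := by
    rw [deriv_Ep, ← mul_assoc, one_add_X_mul_deriv_Lp]
    ring
  refine ⟨(-1:Polynomial ℚ_[p])^(p-1) * (-S) - C ((((p-1).factorial : ℕ) : ℚ_[p])⁻¹) * g, ?_⟩
  rw [hmul, hE, hg, neg_pow]
  ring

lemma coeff_rec (n : ℕ) (hn : n < p - 1) :
    ((n:ℚ_[p])+1) * (Ep p).coeff (n+1) = (1 - (n:ℚ_[p])) * (Ep p).coeff n := by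
  have h0 := (X_pow_dvd_iff.mp (key_dvd p)) n hn
  have hXmul : (X * derivative (Ep p)).coeff n = (Ep p).coeff n * n := by
    cases n with
    | zero => simp [Polynomial.mul_coeff_zero]
    | succ m => rw [coeff_X_mul, coeff_derivative]; push_cast; ring
  rw [coeff_sub, add_mul, one_mul, coeff_add, hXmul, coeff_derivative] at h0
  linear_combination h0

lemma coeff_Ep_zero : (Ep p).coeff 0 = 1 := by
  rw [coeff_zero_eq_eval_zero, Ep, eval_finset_sum]
  have hL : eval 0 (Lp p) = 0 := by
    rw [Lp, eval_finset_sum]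
    refine Finset.sum_eq_zero fun j hj => ?_
    have hj1 : 1 ≤ j := (Finset.mem_Icc.mp hj).1
    simp [zero_pow (by omega : j ≠ 0)]
  have hpos := hp.out.pos
  rw [Finset.sum_eq_single 0]
  · simp
  · intro k hk hk0
    simp [hL, zero_pow hk0]
  · intro h; exact absurd (Finset.mem_range.mpr hpos) h

lemma coeff_Ep (n : ℕ) (hn : n < p) : (Ep p).coeff n = if n ≤ 1 then 1 else 0 := by
  induction n with
  | zero => simpa using coeff_Ep_zero p
  | succ m ih =>
    have hm : m < p - 1 := by omega
    have hrec := coeff_rec p m hm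
    have hem := ih (by omega)
    have hne : ((m:ℚ_[p])+1) ≠ 0 := Nat.cast_add_one_ne_zero m
    rcases Nat.lt_or_ge m 1 with hm1 | hm1
    · interval_cases m
      rw [hem] at hrec
      norm_num at hrec
      simpa using hrec
    · have hrhs : (1 - (m:ℚ_[p])) * (Ep p).coeff m = 0 := by
        rcases Nat.eq_or_lt_of_le hm1 with h1 | h2
        · rw [← h1]; norm_num
        · rw [hem, if_neg (by omega)]; ring
      rw [hrhs] at hrec
      have := mul_eq_zero.mp hrec
      rw [if_neg (by omega)]
      tauto

lemma Ep_eq : ∃ Q : Polynomial ℚ_[p], Ep p = 1 + X + X^p * Q := by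
  have hdvd : X^p ∣ (Ep p - (1 + X)) := by
    rw [X_pow_dvd_iff]
    intro d hd
    rw [coeff_sub, coeff_Ep p d hd, coeff_add, coeff_one, coeff_X]
    rcases Nat.lt_or_ge d 2 with h2 | h2
    · interval_cases d <;> norm_num
    · rw [if_neg (by omega)]
      simp only [if_neg (by omega : ¬ d = 0), if_neg (by omega : ¬ 1 = d)]
      ring
  obtain ⟨Q, hQ⟩ := hdvd
  exact ⟨Q, by linear_combination hQ⟩

lemma Lp_def : Lp p = ∑ j ∈ Finset.Icc 1 (p-1), C ((-1:ℚ_[p])^(j+1) * (j:ℚ_[p])⁻¹) * X^j := rfl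

lemma Ep_def : Ep p = ∑ k ∈ Finset.range p, C ((k.factorial : ℚ_[p])⁻¹) * (Lp p)^k := rfl

lemma isUnit_natCast (n : ℕ) (h : ¬ (p:ℤ) ∣ (n:ℤ)) : IsUnit (n : ℤ_[p]) := by
  rw [PadicInt.isUnit_iff]
  have h1 : ‖(n : ℤ_[p])‖ ≤ 1 := PadicInt.norm_le_one _
  have h2 : ¬ ‖(n : ℤ_[p])‖ < 1 := by
    rw [show ((n:ℤ_[p])) = ((n:ℤ) : ℤ_[p]) from by push_cast; ring,
      PadicInt.norm_int_lt_one_iff_dvd]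
    exact h
  linarith

lemma coe_ringInverse (z : ℤ_[p]) (hz : IsUnit z) :
    ((Ring.inverse z : ℤ_[p]) : ℚ_[p]) = (z : ℚ_[p])⁻¹ := by
  have h1 := Ring.mul_inverse_cancel z hz
  have h2 : (z : ℚ_[p]) * ((Ring.inverse z : ℤ_[p]) : ℚ_[p]) = 1 := by
    exact_mod_cast congrArg (fun x : ℤ_[p] => (x : ℚ_[p])) h1
  exact eq_inv_of_mul_eq_one_right h2


end TruncAux

/-- The truncated exponential `E_p(M) = Σ_{k=0}^{p-1} (k!)⁻¹ M^k`. -/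
noncomputable def truncExp (p : ℕ) [Fact p.Prime] {N : ℕ}
    (M : Matrix (Fin N) (Fin N) ℤ_[p]) : Matrix (Fin N) (Fin N) ℤ_[p] :=
  ∑ k ∈ Finset.range p, Ring.inverse ((k.factorial : ℤ_[p])) • M ^ k

/-- The truncated logarithm `L_p(u) = Σ_{k=1}^{p-1} (-1)^{k+1} k⁻¹ (u-1)^k`. -/
noncomputable def truncLog (p : ℕ) [Fact p.Prime] {N : ℕ}
    (u : Matrix (Fin N) (Fin N) ℤ_[p]) : Matrix (Fin N) (Fin N) ℤ_[p] :=
  ∑ k ∈ Finset.Icc 1 (p - 1),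
    ((-1 : ℤ_[p]) ^ (k + 1) * Ring.inverse (k : ℤ_[p])) • (u - 1) ^ k

open TruncAux in
/-- If `(u-1)^p = 0` then `E_p(L_p(u)) = u`. -/
theorem truncExp_truncLog (p : ℕ) [Fact p.Prime] (N : ℕ) (hN : 1 ≤ N)
    (u : Matrix (Fin N) (Fin N) ℤ_[p]) (hu : (u - 1) ^ p = 0) :
    truncExp p (truncLog p u) = u := by
  classical
  have hpp : p.Prime := Fact.out
  set φ : Matrix (Fin N) (Fin N) ℤ_[p] →+* Matrix (Fin N) (Fin N) ℚ_[p] :=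
    (PadicInt.Coe.ringHom).mapMatrix with hφ
  have hinj : Function.Injective φ := by
    intro A B h
    have : A.map (PadicInt.Coe.ringHom) = B.map (PadicInt.Coe.ringHom) := by
      simpa [hφ, RingHom.mapMatrix_apply] using h
    exact Matrix.map_injective Subtype.coe_injective this
  have hsmul : ∀ (r : ℤ_[p]) (A : Matrix (Fin N) (Fin N) ℤ_[p]),
      φ (r • A) = ((r : ℚ_[p])) • φ A := by
    intro r A; ext i j
    simp only [hφ, RingHom.mapMatrix_apply, Matrix.map_apply, Matrix.smul_apply,
      smul_eq_mul]
    rw [show ∀ z : ℤ_[p], PadicInt.Coe.ringHom z = (z : ℚ_[p]) from fun _ => rfl,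
      show ∀ z : ℤ_[p], PadicInt.Coe.ringHom z = (z : ℚ_[p]) from fun _ => rfl]
    push_cast
    ring
  set x : Matrix (Fin N) (Fin N) ℚ_[p] := φ u - 1 with hxdef
  have hx : x ^ p = 0 := by
    have := congrArg φ hu
    simpa [map_pow, map_sub, map_one] using this
  have hL : φ (truncLog p u) = Polynomial.aeval x (Lp p) := by
    rw [truncLog, Lp_def, map_sum, map_sum]
    refine Finset.sum_congr rfl fun j hj => ?_
    obtain ⟨hj1, hj2⟩ := Finset.mem_Icc.mp hj
    have hjd : ¬ (p:ℤ) ∣ (j:ℤ) := by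
      intro hdvd
      have h3 : p ∣ j := by exact_mod_cast hdvd
      have := Nat.le_of_dvd (by omega) h3
      have := hpp.two_le; omega
    have hju : IsUnit (j : ℤ_[p]) := isUnit_natCast p j hjd
    rw [hsmul, map_pow, map_sub, map_one, map_mul, Polynomial.aeval_C, map_pow,
      Polynomial.aeval_X, ← Algebra.smul_def]
    congr 1
    push_cast [coe_ringInverse p _ hju]
    ring
  have hE : φ (truncExp p (truncLog p u)) = Polynomial.aeval x (Ep p) := by
    rw [truncExp, Ep_def, map_sum, map_sum]
    refine Finset.sum_congr rfl fun k hk => ?_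
    have hkp : k < p := Finset.mem_range.mp hk
    have hkd : ¬ (p:ℤ) ∣ (k.factorial:ℤ) := by
      intro hdvd
      have h3 : p ∣ k.factorial := by exact_mod_cast hdvd
      exact absurd ((Nat.Prime.dvd_factorial hpp).mp h3) (by omega)
    have hku : IsUnit (k.factorial : ℤ_[p]) := isUnit_natCast p _ hkd
    rw [hsmul, map_pow, hL, map_mul, Polynomial.aeval_C, map_pow, ← Algebra.smul_def]
    congr 1
    push_cast [coe_ringInverse p _ hku]
    ring
  apply hinj
  obtain ⟨Q, hQ⟩ := Ep_eq p
  rw [hE, hQ]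
  rw [map_add, map_add, map_one, Polynomial.aeval_X, map_mul, map_pow,
    Polynomial.aeval_X, hx]
  simp [hxdef]
end

section
/- Let p be a prime, N ≥ 1, and let β be an N×N matrix over ℤ_p with β^p = 0. Then E_p(β)·E_p(−β) = 1 (so E_p(β) is invertible), and for every natural number m one has E_p(m·β) = (E_p(β))^m. -/
open Finset Polynomial

section Aux

variable {p : ℕ} [hp : Fact p.Prime]

lemma isUnit_fact {k : ℕ} (hk : k < p) : IsUnit ((k.factorial : ℤ_[p])) := by
  rw [PadicInt.isUnit_iff]
  refine le_antisymm (PadicInt.norm_le_one _) (not_lt.mp ?_)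
  have h : ((k.factorial : ℤ) : ℤ_[p]) = (k.factorial : ℤ_[p]) := by push_cast; ring
  rw [← h, PadicInt.norm_int_lt_one_iff_dvd, Int.natCast_dvd_natCast]
  intro hdvd
  have := (hp.out.dvd_factorial).mp hdvd
  omega

/-- The truncated exponential polynomial. -/
noncomputable def truncExpPoly (p : ℕ) [Fact p.Prime] (a : ℤ_[p]) : Polynomial ℤ_[p] :=
  ∑ k ∈ Finset.range p, C (Ring.inverse ((k.factorial : ℤ_[p])) * a ^ k) * X ^ k

lemma coeff_truncExpPoly (a : ℤ_[p]) {n : ℕ} (hn : n < p) :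
    (truncExpPoly p a).coeff n = Ring.inverse ((n.factorial : ℤ_[p])) * a ^ n := by
  rw [truncExpPoly, finset_sum_coeff]
  simp only [coeff_C_mul, coeff_X_pow, mul_ite, mul_one, mul_zero]
  rw [Finset.sum_ite_eq (Finset.range p) n]
  simp [Finset.mem_range.mpr hn]

lemma aeval_truncExpPoly {N : ℕ} (β : Matrix (Fin N) (Fin N) ℤ_[p]) (a : ℤ_[p]) :
    Polynomial.aeval β (truncExpPoly p a) = truncExp p (a • β) := by
  rw [truncExpPoly, truncExp, map_sum]
  refine Finset.sum_congr rfl fun k _ => ?_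
  rw [map_mul, aeval_C, map_pow, aeval_X, _root_.smul_pow, smul_smul, Algebra.smul_def]

lemma inverse_fact_mul {i n : ℕ} (hi : i ≤ n) (hn : n < p) :
    Ring.inverse ((i.factorial : ℤ_[p])) * Ring.inverse (((n - i).factorial : ℤ_[p]))
      = (n.choose i : ℤ_[p]) * Ring.inverse ((n.factorial : ℤ_[p])) := by
  have h1 := isUnit_fact (hi.trans_lt hn)
  have h2 := isUnit_fact ((Nat.sub_le n i).trans_lt hn)
  have h3 := isUnit_fact hn
  have e1 : (i.factorial : ℤ_[p]) * Ring.inverse ((i.factorial : ℤ_[p])) = 1 :=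
    Ring.mul_inverse_cancel _ h1
  have e2 : ((n - i).factorial : ℤ_[p]) * Ring.inverse (((n - i).factorial : ℤ_[p])) = 1 :=
    Ring.mul_inverse_cancel _ h2
  have e3 : (n.factorial : ℤ_[p]) * Ring.inverse ((n.factorial : ℤ_[p])) = 1 :=
    Ring.mul_inverse_cancel _ h3
  have key : (n.choose i : ℤ_[p]) * (i.factorial : ℤ_[p]) * ((n - i).factorial : ℤ_[p])
      = (n.factorial : ℤ_[p]) := by
    exact_mod_cast congrArg (Nat.cast : ℕ → ℤ_[p]) (Nat.choose_mul_factorial_mul_factorial hi)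
  set A := Ring.inverse ((i.factorial : ℤ_[p]))
  set B := Ring.inverse (((n - i).factorial : ℤ_[p]))
  set Cn := Ring.inverse ((n.factorial : ℤ_[p]))
  linear_combination (-(A * B)) * e3 - (A * B * Cn) * key +
    ((n.choose i : ℤ_[p]) * Cn * ((n - i).factorial : ℤ_[p]) * B) * e1 +
    ((n.choose i : ℤ_[p]) * Cn) * e2

lemma coeff_mul_truncExpPoly (a b : ℤ_[p]) {n : ℕ} (hn : n < p) :
    (truncExpPoly p a * truncExpPoly p b).coeff n = (truncExpPoly p (a + b)).coeff n := by
  rw [coeff_mul, coeff_truncExpPoly _ hn,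
    Finset.Nat.sum_antidiagonal_eq_sum_range_succ
      (fun i j => (truncExpPoly p a).coeff i * (truncExpPoly p b).coeff j),
    add_pow, Finset.mul_sum]
  refine Finset.sum_congr rfl fun i hi => ?_
  have hi' : i ≤ n := Nat.lt_succ_iff.mp (Finset.mem_range.mp hi)
  rw [coeff_truncExpPoly _ (hi'.trans_lt hn),
    coeff_truncExpPoly _ ((Nat.sub_le n i).trans_lt hn)]
  linear_combination (a ^ i * b ^ (n - i)) * inverse_fact_mul hi' hn

lemma truncExp_mul {N : ℕ} (β : Matrix (Fin N) (Fin N) ℤ_[p]) (hβ : β ^ p = 0) (a b : ℤ_[p]) :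
    truncExp p (a • β) * truncExp p (b • β) = truncExp p ((a + b) • β) := by
  rw [← aeval_truncExpPoly β a, ← aeval_truncExpPoly β b, ← aeval_truncExpPoly β (a + b),
    ← map_mul]
  obtain ⟨R, hR⟩ : (X : Polynomial ℤ_[p]) ^ p ∣
      (truncExpPoly p a * truncExpPoly p b - truncExpPoly p (a + b)) := by
    rw [Polynomial.X_pow_dvd_iff]
    intro d hd
    rw [coeff_sub, coeff_mul_truncExpPoly a b hd, sub_self]
  have h : truncExpPoly p a * truncExpPoly p b = X ^ p * R + truncExpPoly p (a + b) :=
    sub_eq_iff_eq_add.mp hR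
  rw [h, map_add, map_mul, map_pow, aeval_X, hβ, zero_mul, zero_add]

lemma truncExp_zero {N : ℕ} : truncExp p (0 : Matrix (Fin N) (Fin N) ℤ_[p]) = 1 := by
  rw [truncExp, Finset.sum_eq_single 0]
  · simp [Nat.factorial]
  · intro k _ hk0
    rw [zero_pow hk0, smul_zero]
  · intro h
    exact absurd (Finset.mem_range.mpr hp.out.pos) h

end Aux

/-- If `β^p = 0` then `E_p(β)·E_p(-β) = 1` and `E_p(m·β) = E_p(β)^m` for all `m : ℕ`. -/
theorem truncExp_inv_and_pow (p : ℕ) [Fact p.Prime] (N : ℕ) (hN : 1 ≤ N)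
    (β : Matrix (Fin N) (Fin N) ℤ_[p]) (hβ : β ^ p = 0) :
    truncExp p β * truncExp p (-β) = 1 ∧
    ∀ m : ℕ, truncExp p ((m : ℤ_[p]) • β) = truncExp p β ^ m := by
  constructor
  · have h := truncExp_mul β hβ 1 (-1)
    rw [one_smul, neg_one_smul, add_neg_cancel, zero_smul, truncExp_zero] at h
    exact h
  · intro m
    induction m with
    | zero => simp [truncExp_zero]
    | succ k ih =>
      have h := truncExp_mul β hβ (k : ℤ_[p]) 1
      rw [one_smul, ih] at h
      have hc : ((k : ℤ_[p]) + 1) = (((k + 1 : ℕ) : ℤ_[p])) := by push_cast; ring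
      rw [hc] at h
      rw [← h, pow_succ]
end

section
/- Let p be a prime, N ≥ 1, e ≥ 0 an integer, and let ν be an N×N matrix over ℤ_p with ν^p = 0. Set u := 1 + p^e·ν and β := Σ_{k=1}^{p−1} (−1)^{k+1} p^{e(k−1)} k^{−1} ν^k. Let F be a polynomial over ℤ_p in N² variables indexed by the pairs (i,j), 1 ≤ i,j ≤ N. If F vanishes when the variables are evaluated at the entries of u^m for every natural number m, then the polynomial in ℤ_p[t] obtained by evaluating the variables of F at the corresponding entries of E_p(tβ) is the zero polynomial. -/
/-- The one-variable truncated exponential `E_p(tM) = Σ_{k=0}^{p-1} (k!)⁻¹ t^k M^k`,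
a matrix over `ℤ_p[t]`. -/
noncomputable def truncExpT (p : ℕ) [Fact p.Prime] {N : ℕ}
    (M : Matrix (Fin N) (Fin N) ℤ_[p]) : Matrix (Fin N) (Fin N) (Polynomial ℤ_[p]) :=
  ∑ k ∈ Finset.range p,
    (Polynomial.C (Ring.inverse ((k.factorial : ℤ_[p]))) * Polynomial.X ^ k) •
      (M.map Polynomial.C) ^ k


open Polynomial Finset

section Aux
variable (p : ℕ) [Fact p.Prime]

lemma isUnit_cast_of_lt {k : ℕ} (h0 : 0 < k) (h : k < p) : IsUnit (k : ℤ_[p]) := by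
  rw [PadicInt.isUnit_iff]
  have hle : ‖(k : ℤ_[p])‖ ≤ 1 := PadicInt.norm_le_one _
  have h2 : ¬ ((p:ℤ) ∣ (k:ℤ)) := by
    rw [Int.natCast_dvd_natCast]
    intro hd
    exact absurd (Nat.le_of_dvd h0 hd) (not_le.mpr h)
  have h3 := (PadicInt.norm_int_lt_one_iff_dvd (p := p) (k : ℤ)).not.mpr h2
  have h4 : ((k : ℤ) : ℤ_[p]) = (k : ℤ_[p]) := by push_cast; ring
  rw [h4] at h3
  exact le_antisymm hle (not_lt.mp h3)

lemma isUnit_factorial_cast {k : ℕ} (h : k < p) : IsUnit ((k.factorial : ℤ_[p])) := by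
  induction k with
  | zero => simp
  | succ n ih =>
    have h1 : IsUnit ((n+1 : ℕ) : ℤ_[p]) := isUnit_cast_of_lt p (Nat.succ_pos n) h
    have h2 := ih (Nat.lt_of_succ_lt h)
    have h3 : (((n+1).factorial : ℕ) : ℤ_[p]) = ((n+1 : ℕ) : ℤ_[p]) * ((n.factorial : ℕ) : ℤ_[p]) := by
      rw [Nat.factorial_succ]; push_cast; ring
    rw [h3]; exact h1.mul h2

lemma inverse_fact_succ_mul {k : ℕ} (h : k + 1 < p) :
    Ring.inverse (((k+1).factorial : ℤ_[p])) * (((k+1 : ℕ) : ℤ_[p])) =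
      Ring.inverse ((k.factorial : ℤ_[p])) := by
  have hu1 : IsUnit ((k+1 : ℕ) : ℤ_[p]) := isUnit_cast_of_lt p (Nat.succ_pos k) h
  have hu2 : IsUnit ((k.factorial : ℤ_[p])) := isUnit_factorial_cast p (Nat.lt_of_succ_lt h)
  have hu3 : IsUnit (((k+1).factorial : ℤ_[p])) := isUnit_factorial_cast p h
  apply hu2.mul_right_cancel
  rw [Ring.inverse_mul_cancel _ hu2]
  have h5 : ((k+1 : ℕ) : ℤ_[p]) * ((k.factorial : ℕ) : ℤ_[p]) = (((k+1).factorial : ℕ) : ℤ_[p]) := by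
    rw [Nat.factorial_succ]; push_cast; ring
  rw [mul_assoc, h5, Ring.inverse_mul_cancel _ hu3]

lemma inverse_fact_choose {i j : ℕ} (h : i + j < p) :
    Ring.inverse (((i+j).factorial : ℤ_[p])) * (((i+j).choose i : ℕ) : ℤ_[p])
      = Ring.inverse ((i.factorial : ℤ_[p])) * Ring.inverse ((j.factorial : ℤ_[p])) := by
  have hui : IsUnit ((i.factorial : ℤ_[p])) := isUnit_factorial_cast p (by omega)
  have huj : IsUnit ((j.factorial : ℤ_[p])) := isUnit_factorial_cast p (by omega)
  have hun : IsUnit (((i+j).factorial : ℤ_[p])) := isUnit_factorial_cast p h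
  apply (hui.mul huj).mul_right_cancel
  have hch : (i+j).choose i = (i+j).choose j := by
    have := Nat.choose_symm (n := i + j) (k := i) (by omega)
    rw [show i + j - i = j by omega] at this
    exact this.symm
  have key : (((i+j).choose i : ℕ) : ℤ_[p]) * ((i.factorial : ℤ_[p]) * (j.factorial : ℤ_[p]))
      = (((i+j).factorial : ℕ) : ℤ_[p]) := by
    rw [hch]
    have := Nat.add_choose_mul_factorial_mul_factorial i j
    push_cast [← this]; ring
  rw [mul_assoc, key, Ring.inverse_mul_cancel _ hun, mul_mul_mul_comm,
    Ring.inverse_mul_cancel _ hui, Ring.inverse_mul_cancel _ huj, one_mul]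

/-- truncated log -/
noncomputable def Lpoly : Polynomial ℤ_[p] :=
  ∑ j ∈ Finset.Icc 1 (p-1), C ((-1 : ℤ_[p])^(j+1) * Ring.inverse (j : ℤ_[p])) * X ^ j

/-- truncated exp of truncated log -/
noncomputable def Gpoly : Polynomial ℤ_[p] :=
  ∑ k ∈ range p, C (Ring.inverse ((k.factorial : ℤ_[p]))) * (Lpoly p)^k

lemma X_dvd_L : (X : Polynomial ℤ_[p]) ∣ Lpoly p := by
  apply dvd_sum
  intro j hj
  have hj1 : 1 ≤ j := (mem_Icc.mp hj).1
  exact (dvd_pow_self X (by omega)).mul_left _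

lemma derivative_L : derivative (Lpoly p) = ∑ i ∈ range (p-1), (-X : Polynomial ℤ_[p])^i := by
  have hp2 : 2 ≤ p := (Fact.out (p := p.Prime)).two_le
  unfold Lpoly
  rw [map_sum]
  have h1 : ∀ j ∈ Finset.Icc 1 (p-1),
      derivative (C ((-1 : ℤ_[p])^(j+1) * Ring.inverse (j : ℤ_[p])) * X ^ j)
        = C ((-1 : ℤ_[p])^(j+1)) * X^(j-1) := by
    intro j hj
    have hj1 := mem_Icc.mp hj
    rw [derivative_C_mul_X_pow]
    congr 1
    have hu : IsUnit ((j : ℕ) : ℤ_[p]) := isUnit_cast_of_lt p (by omega) (by omega)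
    rw [mul_assoc, Ring.inverse_mul_cancel _ hu, mul_one]
  rw [sum_congr rfl h1]
  rw [← Finset.Ico_add_one_right_eq_Icc, show (p-1) + 1 = p by omega, Finset.sum_Ico_eq_sum_range]
  apply sum_congr rfl
  intro i _
  rw [show (1 + i) + 1 = i + 2 by omega, show 1 + i - 1 = i by omega]
  rw [neg_pow (X : Polynomial ℤ_[p]) i, pow_add, neg_one_sq, mul_one, map_pow, map_neg, map_one]

lemma one_add_X_mul_derivative_L :
    (1 + X) * derivative (Lpoly p) = 1 - (-X : Polynomial ℤ_[p])^(p-1) := by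
  rw [derivative_L]
  have h := geom_sum_mul (-X : Polynomial ℤ_[p]) (p-1)
  linear_combination -h


lemma derivative_G :
    (1 + X) * derivative (Gpoly p)
      = (1 - (-X : Polynomial ℤ_[p])^(p-1)) *
        (Gpoly p - C (Ring.inverse (((p-1).factorial : ℤ_[p]))) * (Lpoly p)^(p-1)) := by
  have hp2 : 2 ≤ p := (Fact.out (p := p.Prime)).two_le
  have hd : derivative (Gpoly p)
      = derivative (Lpoly p) * ∑ i ∈ range (p-1), C (Ring.inverse ((i.factorial : ℤ_[p]))) * (Lpoly p)^i := by
    unfold Gpoly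
    rw [map_sum]
    rw [show range p = range ((p-1)+1) by congr 1; omega, Finset.sum_range_succ']
    have hz : derivative (C (Ring.inverse ((Nat.factorial 0 : ℤ_[p]))) * Lpoly p ^ 0) = 0 := by
      simp
    rw [hz, add_zero, Finset.mul_sum]
    apply sum_congr rfl
    intro i hi
    have him : i + 1 < p := by
      have := mem_range.mp hi; omega
    rw [derivative_C_mul, derivative_pow]
    rw [show i + 1 - 1 = i by omega]
    have hcast : ((i + 1 : ℕ) : Polynomial ℤ_[p]) = C (((i+1 : ℕ) : ℤ_[p])) := by
      push_cast; simp
    calc C (Ring.inverse (((i+1).factorial : ℤ_[p]))) * (((i+1 : ℕ) : Polynomial ℤ_[p]) * Lpoly p ^ i * derivative (Lpoly p))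
        = derivative (Lpoly p) * ((C (Ring.inverse (((i+1).factorial : ℤ_[p]))) * ((i + 1 : ℕ) : Polynomial ℤ_[p])) * Lpoly p ^ i) := by ring
      _ = derivative (Lpoly p) * (C (Ring.inverse ((i.factorial : ℤ_[p]))) * Lpoly p ^ i) := by
          rw [hcast, ← map_mul, inverse_fact_succ_mul p him]
  rw [hd]
  have hsplit : ∑ i ∈ range (p-1), C (Ring.inverse ((i.factorial : ℤ_[p]))) * (Lpoly p)^i
      = Gpoly p - C (Ring.inverse (((p-1).factorial : ℤ_[p]))) * (Lpoly p)^(p-1) := by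
    unfold Gpoly
    rw [show range p = range ((p-1)+1) by congr 1; omega, Finset.sum_range_succ]
    ring
  rw [hsplit, ← mul_assoc, one_add_X_mul_derivative_L]

lemma key_dvd : (X : Polynomial ℤ_[p])^(p-1) ∣ ((1+X) * derivative (Gpoly p) - Gpoly p) := by
  rw [derivative_G]
  have h1 : (X : Polynomial ℤ_[p])^(p-1) ∣ (-X : Polynomial ℤ_[p])^(p-1) := by
    rw [neg_pow]
    exact dvd_mul_left _ _
  have h2 : (X : Polynomial ℤ_[p])^(p-1) ∣ (Lpoly p)^(p-1) := pow_dvd_pow_of_dvd (X_dvd_L p) _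
  have heq : (1 - (-X : Polynomial ℤ_[p])^(p-1)) *
        (Gpoly p - C (Ring.inverse (((p-1).factorial : ℤ_[p]))) * (Lpoly p)^(p-1)) - Gpoly p
      = -((-X : Polynomial ℤ_[p])^(p-1) * Gpoly p)
        - ((1 - (-X : Polynomial ℤ_[p])^(p-1)) * C (Ring.inverse (((p-1).factorial : ℤ_[p])))) * (Lpoly p)^(p-1) := by
    ring
  rw [heq]
  exact dvd_sub (dvd_neg.mpr (h1.mul_right _)) (h2.mul_left _)

lemma G_coeff_zero : (Gpoly p).coeff 0 = 1 := by
  have hp2 : 2 ≤ p := (Fact.out (p := p.Prime)).two_le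
  unfold Gpoly
  rw [finset_sum_coeff]
  rw [Finset.sum_eq_single_of_mem 0 (mem_range.mpr (by omega))]
  · simp
  · intro k _ hk
    have hXk : (X : Polynomial ℤ_[p]) ∣ (Lpoly p)^k := (X_dvd_L p).trans (dvd_pow_self _ hk)
    rw [coeff_C_mul, X_dvd_iff.mp hXk, mul_zero]

lemma core_dvd : (X : Polynomial ℤ_[p])^p ∣ (Gpoly p - (1 + X)) := by
  have hp2 : 2 ≤ p := (Fact.out (p := p.Prime)).two_le
  set H : Polynomial ℤ_[p] := Gpoly p - (1 + X) with hH
  have hdH : derivative H = derivative (Gpoly p) - 1 := by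
    rw [hH, derivative_sub, derivative_add, derivative_one, derivative_X, zero_add]
  have hrel : (X : Polynomial ℤ_[p])^(p-1) ∣ ((1+X) * derivative H - H) := by
    have heq : (1+X) * derivative H - H = (1+X) * derivative (Gpoly p) - Gpoly p := by
      rw [hdH, hH]; ring
    rw [heq]; exact key_dvd p
  have h0 : H.coeff 0 = 0 := by
    rw [hH, coeff_sub, G_coeff_zero, coeff_add, coeff_one]
    simp
  have hAll : ∀ d, d < p → H.coeff d = 0 := by
    intro d
    induction d with
    | zero => intro _; exact h0
    | succ m ih =>
      intro hm1
      have hmih : H.coeff m = 0 := ih (by omega)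
      have hcoeff : ((1+X) * derivative H - H).coeff m = 0 := by
        rw [X_pow_dvd_iff] at hrel
        exact hrel m (by omega)
      have e1 : ((1+X) * derivative H).coeff m
          = (derivative H).coeff m + (X * derivative H).coeff m := by
        rw [add_mul, one_mul, coeff_add]
      have e2 : (X * derivative H).coeff m = 0 := by
        cases m with
        | zero => rw [mul_coeff_zero, coeff_X_zero, zero_mul]
        | succ n =>
          rw [coeff_X_mul, coeff_derivative]
          have : H.coeff (n+1) = 0 := hmih
          rw [this, zero_mul]
      have e3 : (derivative H).coeff m = H.coeff (m+1) * ((m : ℤ_[p]) + 1) := coeff_derivative H m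
      rw [coeff_sub, e1, e2, e3, add_zero, hmih, sub_zero] at hcoeff
      have hu : IsUnit ((m+1 : ℕ) : ℤ_[p]) := isUnit_cast_of_lt p (Nat.succ_pos m) hm1
      have hu' : IsUnit ((m : ℤ_[p]) + 1) := by
        have : ((m+1 : ℕ) : ℤ_[p]) = (m : ℤ_[p]) + 1 := by push_cast; ring
        rwa [this] at hu
      apply hu'.mul_right_cancel
      rw [hcoeff, zero_mul]
  rw [X_pow_dvd_iff]
  exact hAll


variable (e : ℕ)

/-- β as a polynomial in `ν`. -/
noncomputable def Bpoly : Polynomial ℤ_[p] :=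
  ∑ k ∈ Finset.Icc 1 (p-1),
    C ((-1 : ℤ_[p])^(k+1) * (p : ℤ_[p])^(e*(k-1)) * Ring.inverse (k : ℤ_[p])) * X ^ k

/-- truncated exp of `s·β` as a polynomial in `ν`. -/
noncomputable def Epoly (s : ℤ_[p]) : Polynomial ℤ_[p] :=
  ∑ k ∈ range p, C (Ring.inverse ((k.factorial : ℤ_[p])) * s^k) * (Bpoly p e)^k

lemma X_dvd_B : (X : Polynomial ℤ_[p]) ∣ Bpoly p e := by
  apply dvd_sum
  intro j hj
  have hj1 : 1 ≤ j := (mem_Icc.mp hj).1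
  exact (dvd_pow_self X (by omega)).mul_left _

lemma CB_eq : C ((p : ℤ_[p])^e) * Bpoly p e = (Lpoly p).comp (C ((p : ℤ_[p])^e) * X) := by
  unfold Bpoly Lpoly
  rw [Polynomial.sum_comp, Finset.mul_sum]
  apply sum_congr rfl
  intro k hk
  have hk1 : 1 ≤ k := (mem_Icc.mp hk).1
  obtain ⟨k', rfl⟩ : ∃ k', k = k' + 1 := ⟨k - 1, by omega⟩
  rw [Polynomial.mul_comp, Polynomial.C_comp, Polynomial.pow_comp, Polynomial.X_comp]
  rw [mul_pow, ← map_pow, show k' + 1 - 1 = k' by omega]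
  simp only [← mul_assoc, ← map_mul]
  congr 2
  rw [← pow_mul (p : ℤ_[p]) e (k'+1), show e * (k'+1) = e * k' + e by ring, pow_add]
  ring

lemma Epoly_pe :
    (X : Polynomial ℤ_[p])^p ∣ Epoly p e ((p : ℤ_[p])^e) - (1 + C ((p : ℤ_[p])^e) * X) := by
  have h1 : Epoly p e ((p : ℤ_[p])^e) = (Gpoly p).comp (C ((p : ℤ_[p])^e) * X) := by
    unfold Epoly Gpoly
    rw [Polynomial.sum_comp]
    apply sum_congr rfl
    intro k _
    rw [Polynomial.mul_comp, Polynomial.C_comp, Polynomial.pow_comp, ← CB_eq, mul_pow,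
      ← map_pow, ← mul_assoc, ← map_mul]
  rw [h1]
  obtain ⟨q, hq⟩ := core_dvd p
  have h2 : (Gpoly p).comp (C ((p : ℤ_[p])^e) * X) - (1 + C ((p : ℤ_[p])^e) * X)
      = (Gpoly p - (1 + X)).comp (C ((p : ℤ_[p])^e) * X) := by
    rw [Polynomial.sub_comp, Polynomial.add_comp, Polynomial.one_comp, Polynomial.X_comp]
  rw [h2, hq, Polynomial.mul_comp, Polynomial.pow_comp, Polynomial.X_comp, mul_pow]
  exact ((dvd_mul_left _ _).mul_right _)

lemma Epoly_zero : Epoly p e 0 = 1 := by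
  have hp2 : 2 ≤ p := (Fact.out (p := p.Prime)).two_le
  unfold Epoly
  rw [Finset.sum_eq_single_of_mem 0 (mem_range.mpr (by omega))]
  · simp
  · intro k _ hk
    rw [zero_pow hk, mul_zero, map_zero, zero_mul]

lemma Epoly_add (s t : ℤ_[p]) :
    (X : Polynomial ℤ_[p])^p ∣ Epoly p e s * Epoly p e t - Epoly p e (s+t) := by
  classical
  set c : ℕ → ℤ_[p] := fun k => Ring.inverse ((k.factorial : ℤ_[p])) with hc
  set B : Polynomial ℤ_[p] := Bpoly p e with hB
  have hsq : Epoly p e s * Epoly p e t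
      = ∑ ij ∈ (range p) ×ˢ (range p),
          C (c ij.1 * s^ij.1 * (c ij.2 * t^ij.2)) * B^(ij.1+ij.2) := by
    unfold Epoly
    rw [Finset.sum_mul_sum, Finset.sum_product]
    apply sum_congr rfl
    intro i _
    apply sum_congr rfl
    intro j _
    rw [pow_add]
    simp only [hc, map_mul]
    ring
  have htri : Epoly p e (s+t)
      = ∑ ij ∈ ((range p) ×ˢ (range p)).filter (fun ij => ij.1 + ij.2 < p),
          C (c ij.1 * s^ij.1 * (c ij.2 * t^ij.2)) * B^(ij.1+ij.2) := by
    unfold Epoly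
    have h1 : ∀ n ∈ range p,
        C (c n * (s+t)^n) * B^n
          = ∑ i ∈ range (n+1), C (c i * s^i * (c (n-i) * t^(n-i))) * B^n := by
      intro n hn
      have hnp : n < p := mem_range.mp hn
      rw [add_pow, Finset.mul_sum, map_sum, Finset.sum_mul]
      apply sum_congr rfl
      intro i hi
      have hin : i ≤ n := by have := mem_range.mp hi; omega
      congr 1
      congr 1
      have hkey : c i * c (n-i) = c n * ((n.choose i : ℕ) : ℤ_[p]) := by
        have := inverse_fact_choose p (i := i) (j := n - i) (by omega)
        rw [show i + (n - i) = n by omega] at this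
        rw [hc]
        exact this.symm
      calc c n * (s^i * t^(n-i) * ((n.choose i : ℕ) : ℤ_[p]))
          = (c n * ((n.choose i : ℕ) : ℤ_[p])) * (s^i * t^(n-i)) := by ring
        _ = (c i * c (n-i)) * (s^i * t^(n-i)) := by rw [hkey]
        _ = c i * s^i * (c (n-i) * t^(n-i)) := by ring
    rw [sum_congr rfl h1, Finset.sum_sigma']
    apply Finset.sum_nbij' (i := fun x => (x.2, x.1 - x.2)) (j := fun y => ⟨y.1 + y.2, y.1⟩)
    · rintro ⟨n, i⟩ hx
      simp only [Finset.mem_sigma, mem_range] at hx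
      simp only [Finset.mem_filter, Finset.mem_product, mem_range]
      omega
    · rintro ⟨i, j⟩ hy
      simp only [Finset.mem_filter, Finset.mem_product, mem_range] at hy
      simp only [Finset.mem_sigma, mem_range]
      omega
    · rintro ⟨n, i⟩ hx
      simp only [Finset.mem_sigma, mem_range] at hx
      simp only [Sigma.mk.inj_iff]
      constructor
      · omega
      · apply heq_of_eq
        rfl
    · rintro ⟨i, j⟩ hy
      simp only [Finset.mem_filter, Finset.mem_product, mem_range] at hy
      have hji : i + j - i = j := by omega
      simp [hji]
    · rintro ⟨n, i⟩ hx
      simp only [Finset.mem_sigma, mem_range] at hx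
      simp only []
      rw [show i + (n - i) = n by omega]
  rw [hsq, htri, ← Finset.sum_filter_add_sum_filter_not ((range p) ×ˢ (range p))
    (fun ij => ij.1 + ij.2 < p)]
  rw [add_sub_cancel_left]
  apply dvd_sum
  rintro ⟨i, j⟩ hij
  simp only [Finset.mem_filter, Finset.mem_product, mem_range, not_lt] at hij
  have hd1 : (X : Polynomial ℤ_[p])^(i+j) ∣ B^(i+j) := pow_dvd_pow_of_dvd (X_dvd_B p e) _
  exact (((pow_dvd_pow (X : Polynomial ℤ_[p]) hij.2).trans hd1).mul_left _)

end Aux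


section Matrices

variable (p : ℕ) [Fact p.Prime] (e : ℕ) {N : ℕ} (ν : Matrix (Fin N) (Fin N) ℤ_[p])

/-- β as a matrix. -/
noncomputable def betaMat : Matrix (Fin N) (Fin N) ℤ_[p] :=
  ∑ k ∈ Finset.Icc 1 (p - 1),
    ((-1 : ℤ_[p]) ^ (k + 1) * (p : ℤ_[p]) ^ (e * (k - 1)) * Ring.inverse (k : ℤ_[p])) • ν ^ k

lemma betaMat_eq : betaMat p e ν = Polynomial.aeval ν (Bpoly p e) := by
  unfold betaMat Bpoly
  rw [map_sum]
  apply sum_congr rfl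
  intro k _
  rw [map_mul, map_pow, Polynomial.aeval_X, Polynomial.aeval_C, ← Algebra.smul_def]

/-- the one-parameter family evaluated at `s`. -/
noncomputable def Amat (s : ℤ_[p]) : Matrix (Fin N) (Fin N) ℤ_[p] :=
  ∑ k ∈ range p, (Ring.inverse ((k.factorial : ℤ_[p])) * s ^ k) • (betaMat p e ν) ^ k

lemma Amat_eq (s : ℤ_[p]) : Amat p e ν s = Polynomial.aeval ν (Epoly p e s) := by
  unfold Amat Epoly
  rw [map_sum]
  apply sum_congr rfl
  intro k _
  rw [map_mul, map_pow, Polynomial.aeval_C, ← betaMat_eq, ← Algebra.smul_def]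

lemma aeval_X_pow_mul (hν : ν ^ p = 0) (q : Polynomial ℤ_[p]) :
    Polynomial.aeval ν ((X : Polynomial ℤ_[p])^p * q) = 0 := by
  rw [map_mul, map_pow, Polynomial.aeval_X, hν, zero_mul]

lemma Amat_add (hν : ν ^ p = 0) (s t : ℤ_[p]) :
    Amat p e ν s * Amat p e ν t = Amat p e ν (s + t) := by
  obtain ⟨q, hq⟩ := Epoly_add p e s t
  have h := aeval_X_pow_mul p ν hν q
  rw [← hq, map_sub, map_mul] at h
  rw [Amat_eq, Amat_eq, Amat_eq]
  rwa [sub_eq_zero] at h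

lemma Amat_zero : Amat p e ν 0 = 1 := by
  rw [Amat_eq, Epoly_zero, map_one]

lemma Amat_pe (hν : ν ^ p = 0) : Amat p e ν ((p : ℤ_[p])^e) = 1 + (p : ℤ_[p]) ^ e • ν := by
  obtain ⟨q, hq⟩ := Epoly_pe p e
  have h := aeval_X_pow_mul p ν hν q
  rw [← hq, map_sub, sub_eq_zero] at h
  rw [Amat_eq, h, map_add, map_one, map_mul, Polynomial.aeval_C, Polynomial.aeval_X,
    ← Algebra.smul_def]

lemma Amat_pow (hν : ν ^ p = 0) (m : ℕ) :
    Amat p e ν ((m : ℤ_[p]) * (p : ℤ_[p])^e) = (1 + (p : ℤ_[p]) ^ e • ν) ^ m := by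
  induction m with
  | zero => simp [Amat_zero p e ν]
  | succ n ih =>
    have hcast : ((n+1 : ℕ) : ℤ_[p]) * (p : ℤ_[p])^e
        = (n : ℤ_[p]) * (p : ℤ_[p])^e + (p : ℤ_[p])^e := by push_cast; ring
    rw [hcast, ← Amat_add p e ν hν, ih, Amat_pe p e ν hν, pow_succ]

lemma eval_truncExpT (s : ℤ_[p]) (i j : Fin N) :
    Polynomial.eval s (truncExpT p (betaMat p e ν) i j) = Amat p e ν s i j := by
  unfold truncExpT Amat
  rw [Matrix.sum_apply, Matrix.sum_apply, Polynomial.eval_finset_sum]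
  apply sum_congr rfl
  intro k _
  rw [Matrix.smul_apply, Matrix.smul_apply, smul_eq_mul, smul_eq_mul]
  have hmp : ((betaMat p e ν).map C)^k = ((betaMat p e ν)^k).map C := by
    rw [← RingHom.mapMatrix_apply, ← RingHom.mapMatrix_apply, ← map_pow]
  rw [hmp, Matrix.map_apply, Polynomial.eval_mul, Polynomial.eval_mul, Polynomial.eval_C,
    Polynomial.eval_pow, Polynomial.eval_X, Polynomial.eval_C]

end Matrices

lemma eval_aeval_mv {p : ℕ} [Fact p.Prime] {ι : Type*} (g : ι → Polynomial ℤ_[p]) (s : ℤ_[p])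
    (F : MvPolynomial ι ℤ_[p]) :
    Polynomial.eval s (MvPolynomial.aeval g F) = MvPolynomial.eval (fun i => (g i).eval s) F := by
  have hcomp : (Polynomial.evalRingHom s).comp (algebraMap ℤ_[p] (Polynomial ℤ_[p]))
      = RingHom.id ℤ_[p] := by
    ext r
    simp [Polynomial.algebraMap_eq]
  have h := MvPolynomial.eval₂_comp_left (Polynomial.evalRingHom s)
    (algebraMap ℤ_[p] (Polynomial ℤ_[p])) g F
  rw [hcomp, MvPolynomial.eval₂_id] at h
  rw [MvPolynomial.aeval_def]
  simpa [Function.comp_def] using h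

/-- Let `u = 1 + p^e ν` with `ν^p = 0` and `β = Σ_{k=1}^{p-1} (-1)^{k+1} p^{e(k-1)} k⁻¹ ν^k`.
If a polynomial `F` in the `N²` matrix entries vanishes at `u^m` for every natural `m`, then
it vanishes at `E_p(tβ)` as a polynomial in `t`. -/
theorem vanishing_on_powers_implies_vanishing_on_one_param_subgroup
    (p : ℕ) [Fact p.Prime] (N : ℕ) (hN : 1 ≤ N) (e : ℕ)
    (ν : Matrix (Fin N) (Fin N) ℤ_[p]) (hν : ν ^ p = 0)
    (F : MvPolynomial (Fin N × Fin N) ℤ_[p])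
    (hF : ∀ m : ℕ,
      MvPolynomial.eval (fun ij => ((1 + (p : ℤ_[p]) ^ e • ν) ^ m) ij.1 ij.2) F = 0) :
    MvPolynomial.aeval
      (fun ij : Fin N × Fin N =>
        truncExpT p
          (∑ k ∈ Finset.Icc 1 (p - 1),
            ((-1 : ℤ_[p]) ^ (k + 1) * (p : ℤ_[p]) ^ (e * (k - 1)) * Ring.inverse (k : ℤ_[p])) •
              ν ^ k) ij.1 ij.2) F = 0 := by
  show MvPolynomial.aeval
      (fun ij : Fin N × Fin N => truncExpT p (betaMat p e ν) ij.1 ij.2) F = 0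
  apply Polynomial.eq_zero_of_infinite_isRoot
  have hinj : Function.Injective (fun m : ℕ => (m : ℤ_[p]) * (p : ℤ_[p])^e) := by
    intro a b hab
    have hpne : ((p : ℤ_[p]))^e ≠ 0 :=
      pow_ne_zero _ (Nat.cast_ne_zero.mpr (Fact.out (p := p.Prime)).ne_zero)
    exact Nat.cast_injective (mul_right_cancel₀ hpne hab)
  apply Set.Infinite.mono ?_ (Set.infinite_range_of_injective hinj)
  rintro x ⟨m, rfl⟩
  show Polynomial.IsRoot _ ((m : ℤ_[p]) * (p : ℤ_[p])^e)
  rw [Polynomial.IsRoot, eval_aeval_mv]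
  have hfun : (fun ij : Fin N × Fin N =>
        Polynomial.eval ((m : ℤ_[p]) * (p : ℤ_[p])^e) (truncExpT p (betaMat p e ν) ij.1 ij.2))
      = fun ij : Fin N × Fin N => ((1 + (p : ℤ_[p]) ^ e • ν) ^ m) ij.1 ij.2 := by
    funext ij
    rw [eval_truncExpT, Amat_pow p e ν hν m]
  rw [hfun]
  exact hF m
end
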